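/- arXiv:2507.02305 — 5 statements merged into one kernel-verified Lean document; each statement's English description precedes it below -/
import Mathlib

section
/- Let B, N > 0 and C > R be real constants with C − R > e^{−3}/(2 ln 2). Then the function Φ(x) = ((C − R)·B·N·x + (1/2)·log₂(B·N·x)) / (log₂ e · √(B·N·x)) is strictly increasing on (0, ∞). -/
/-- Key inequality: `log t ≤ 1 + (e⁻³/2) t²` for `t > 0`. -/
lemma log_le_aux (t : ℝ) (ht : 0 < t) :
    Real.log t ≤ 1 + Real.exp (-3) / 2 * t ^ 2 := by
  have he : (0:ℝ) < Real.exp (-(3:ℝ)/2) := Real.exp_pos _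
  have h1 : Real.log (t * Real.exp (-(3:ℝ)/2)) ≤ t * Real.exp (-(3:ℝ)/2) - 1 :=
    Real.log_le_sub_one_of_pos (by positivity)
  have h2 : Real.log (t * Real.exp (-(3:ℝ)/2)) = Real.log t - 3/2 := by
    rw [Real.log_mul (ne_of_gt ht) (ne_of_gt he), Real.log_exp]; ring
  have h3 : Real.exp (-(3:ℝ)/2) * Real.exp (-(3:ℝ)/2) = Real.exp (-3) := by
    rw [← Real.exp_add]; norm_num
  nlinarith [sq_nonneg (t * Real.exp (-(3:ℝ)/2) - 1)]

/-- The auxiliary function `g(t) = k t + log t / t` is strictly increasing on `(0,∞)`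
when `k > e⁻³/2`. -/
lemma g_strictMono (k : ℝ) (hk : Real.exp (-3) / 2 < k) :
    StrictMonoOn (fun t : ℝ => k * t + Real.log t / t) (Set.Ioi 0) := by
  apply strictMonoOn_of_deriv_pos (convex_Ioi 0)
  · apply ContinuousOn.add (Continuous.continuousOn (by continuity))
    exact ContinuousOn.div (Real.continuousOn_log.mono (fun x hx => ne_of_gt hx))
      continuousOn_id (fun x hx => ne_of_gt hx)
  · intro t ht
    rw [interior_Ioi] at ht
    have ht' : (0:ℝ) < t := ht
    have hd : HasDerivAt (fun t : ℝ => k * t + Real.log t / t)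
        (k * 1 + (t⁻¹ * t - Real.log t * 1) / t ^ 2) t :=
      ((hasDerivAt_id t).const_mul k).add
        ((Real.hasDerivAt_log (ne_of_gt ht')).div (hasDerivAt_id t) (ne_of_gt ht'))
    rw [hd.deriv]
    have hlog := log_le_aux t ht'
    have h2 : k * 1 + (t⁻¹ * t - Real.log t * 1) / t ^ 2
        = k + (1 - Real.log t) / t ^ 2 := by
      field_simp
    rw [h2]
    have ht2 : (0:ℝ) < t ^ 2 := by positivity
    have h4 : -k * t ^ 2 < 1 - Real.log t := by nlinarith
    have h5 : -k < (1 - Real.log t) / t ^ 2 := by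
      rw [lt_div_iff₀ ht2]; linarith
    linarith
    
/-- If `B, N > 0` and `C − R > e^{−3}/(2 ln 2)`, then
`Φ(x) = ((C−R)·B·N·x + (1/2)·log₂(B·N·x)) / (log₂ e · √(B·N·x))`
is strictly increasing on `(0, ∞)`. -/
theorem stmt_1 (B N C R : ℝ) (hB : 0 < B) (hN : 0 < N) (hCR : R < C)
    (h : Real.exp (-3) / (2 * Real.log 2) < C - R) :
    StrictMonoOn
      (fun x : ℝ =>
        ((C - R) * B * N * x + (1 / 2) * Real.logb 2 (B * N * x)) /
          (Real.logb 2 (Real.exp 1) * Real.sqrt (B * N * x)))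
      (Set.Ioi 0) := by
  set k := (C - R) * Real.log 2 with hkdef
  have hlog2 : (0:ℝ) < Real.log 2 := Real.log_pos (by norm_num)
  have hk : Real.exp (-3) / 2 < k := by
    have := (div_lt_iff₀ (by positivity)).mp h
    rw [hkdef]; nlinarith
  have hg := g_strictMono k hk
  have key : ∀ x ∈ Set.Ioi (0:ℝ),
      ((C - R) * B * N * x + (1 / 2) * Real.logb 2 (B * N * x)) /
          (Real.logb 2 (Real.exp 1) * Real.sqrt (B * N * x))
        = k * Real.sqrt (B * N * x) + Real.log (Real.sqrt (B * N * x)) / Real.sqrt (B * N * x) := by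
    intro x hx
    have hx' : (0:ℝ) < x := hx
    have hax : (0:ℝ) < B * N * x := by positivity
    set t := Real.sqrt (B * N * x) with htdef
    have ht : (0:ℝ) < t := Real.sqrt_pos.mpr hax
    have ht2 : t ^ 2 = B * N * x := Real.sq_sqrt (le_of_lt hax)
    have hlb : Real.logb 2 (B * N * x) = 2 * Real.log t / Real.log 2 := by
      rw [Real.logb, ← ht2]
      rw [Real.log_pow]
      push_cast; ring
    have hle : Real.logb 2 (Real.exp 1) = 1 / Real.log 2 := by
      rw [Real.logb, Real.log_exp]
    rw [hlb, hle, show (C - R) * B * N * x = (C - R) * t ^ 2 by rw [ht2]; ring]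
    field_simp
    ring
  intro x hx y hy hxy
  have hx' : (0:ℝ) < x := hx
  have hy' : (0:ℝ) < y := hy
  dsimp only
  rw [key x hx, key y hy]
  apply hg (Set.mem_Ioi.mpr (Real.sqrt_pos.mpr (by positivity)))
    (Set.mem_Ioi.mpr (Real.sqrt_pos.mpr (by positivity)))
  apply Real.sqrt_lt_sqrt (by positivity)
  have : (0:ℝ) < B * N := by positivity
  nlinarith
end

section
/- Let B, N > 0 and C > R be real constants with C − R > e^{−3}/(2 ln 2), let Φ(x) = ((C − R)·B·N·x + (1/2)·log₂(B·N·x)) / (log₂ e · √(B·N·x)) for x > 0, and let Q(x) = ∫_x^∞ (1/√(2π)) e^{−t²/2} dt. Then for every P ∈ (0, 1) there exists a unique t > 0 satisfying Q(Φ(t)) = 1 − P, namely t = Φ⁻¹(Q⁻¹(1 − P)); moreover this unique solution t is a strictly increasing function of P on (0, 1). -/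
open MeasureTheory Set Filter Real Topology

/-- Lemma 2 of the paper: for every success probability `P ∈ (0,1)` there is a
unique positive latency `t` with `Q(Φ(t)) = 1 − P`, and this unique solution is
strictly increasing in `P`. -/
theorem stmt_4 (B N C R : ℝ) (hB : 0 < B) (hN : 0 < N) (hCR : R < C)
    (h : Real.exp (-3) / (2 * Real.log 2) < C - R)
    (Φ : ℝ → ℝ)
    (hΦ : ∀ x : ℝ, Φ x =
      ((C - R) * B * N * x + (1 / 2) * Real.logb 2 (B * N * x)) /
        (Real.logb 2 (Real.exp 1) * Real.sqrt (B * N * x)))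
    (Q : ℝ → ℝ)
    (hQ : ∀ x : ℝ, Q x =
      ∫ t in Set.Ioi x, (1 / Real.sqrt (2 * Real.pi)) * Real.exp (-t ^ 2 / 2)) :
    (∀ P : ℝ, P ∈ Set.Ioo (0 : ℝ) 1 → ∃! t : ℝ, 0 < t ∧ Q (Φ t) = 1 - P) ∧
    (∀ P₁ P₂ : ℝ, P₁ ∈ Set.Ioo (0 : ℝ) 1 → P₂ ∈ Set.Ioo (0 : ℝ) 1 → P₁ < P₂ →
      ∀ t₁ t₂ : ℝ, (0 < t₁ ∧ Q (Φ t₁) = 1 - P₁) → (0 < t₂ ∧ Q (Φ t₂) = 1 - P₂) →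
        t₁ < t₂) := by
  have hBN : 0 < B * N := mul_pos hB hN
  have hπ : 0 < Real.sqrt (2 * Real.pi) := Real.sqrt_pos.2 (by positivity)
  -- the Gaussian density
  set f : ℝ → ℝ := fun t => (1 / Real.sqrt (2 * Real.pi)) * Real.exp (-t ^ 2 / 2) with hf
  have hf' : f = fun t => (1 / Real.sqrt (2 * Real.pi)) * Real.exp (-(1/2) * t ^ 2) := by
    rw [hf]; funext t; congr 1; ring_nf
  have hfpos : ∀ t, 0 < f t := fun t => by rw [hf]; positivity
  have hfi : Integrable f := by
    rw [hf']
    exact (integrable_exp_neg_mul_sq (by norm_num : (0:ℝ) < 1/2)).const_mul _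
  have htot : ∫ t, f t = 1 := by
    rw [hf', MeasureTheory.integral_const_mul, integral_gaussian,
      show Real.pi / (1/2) = 2 * Real.pi by ring]
    field_simp
  have hQ' : ∀ x, Q x = ∫ t in Set.Ioi x, f t := fun x => hQ x
  have hsupp : Function.support f = Set.univ :=
    Set.eq_univ_of_forall fun t => (hfpos t).ne'
  -- difference of Q values
  have hQsub : ∀ u v : ℝ, u ≤ v → Q u = (∫ t in Set.Ioc u v, f t) + Q v := by
    intro u v huv
    rw [hQ' u, hQ' v, ← MeasureTheory.setIntegral_union (Set.Ioc_disjoint_Ioi le_rfl)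
      measurableSet_Ioi hfi.integrableOn hfi.integrableOn, Set.Ioc_union_Ioi_eq_Ioi huv]
  have hIocpos : ∀ u v : ℝ, u < v → 0 < ∫ t in Set.Ioc u v, f t := by
    intro u v huv
    rw [MeasureTheory.setIntegral_pos_iff_support_of_nonneg_ae
      (ae_of_all _ fun t => (hfpos t).le) hfi.integrableOn]
    rw [hsupp, Set.univ_inter, Real.volume_Ioc]
    exact ENNReal.ofReal_pos.2 (by linarith)
  have Qanti : ∀ u v : ℝ, u ≤ v → Q v ≤ Q u := by
    intro u v huv
    have h1 := hQsub u v huv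
    have h2 : 0 ≤ ∫ t in Set.Ioc u v, f t :=
      MeasureTheory.setIntegral_nonneg measurableSet_Ioc fun t _ => (hfpos t).le
    linarith
  have Qstrict : ∀ u v : ℝ, u < v → Q v < Q u := by
    intro u v huv
    have h1 := hQsub u v huv.le
    have h2 := hIocpos u v huv
    linarith
  -- primitive representation and continuity of Q
  have Qprim : ∀ x, Q x = Q 0 - ∫ t in (0:ℝ)..x, f t := by
    intro x
    rcases le_total 0 x with hx | hx
    · rw [intervalIntegral.integral_of_le hx]
      have := hQsub 0 x hx; linarith
    · rw [intervalIntegral.integral_symm, intervalIntegral.integral_of_le hx]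
      have := hQsub x 0 hx; linarith
  have Qcont : Continuous Q := by
    have : Q = fun x => Q 0 - ∫ t in (0:ℝ)..x, f t := funext Qprim
    rw [this]
    exact continuous_const.sub (hfi.continuous_primitive 0)
  -- limits of Q
  have QtendTop : Tendsto Q atTop (𝓝 0) := by
    have h1 : Tendsto (fun x : ℝ => ∫ t in (0:ℝ)..x, f t) atTop (𝓝 (∫ t in Set.Ioi 0, f t)) :=
      intervalIntegral_tendsto_integral_Ioi 0 hfi.integrableOn tendsto_id
    have h2 : Tendsto (fun x : ℝ => Q 0 - ∫ t in (0:ℝ)..x, f t) atTop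
        (𝓝 (Q 0 - ∫ t in Set.Ioi 0, f t)) := tendsto_const_nhds.sub h1
    have h3 : Q 0 - ∫ t in Set.Ioi 0, f t = 0 := by rw [hQ' 0]; ring
    rw [h3] at h2
    exact h2.congr fun x => (Qprim x).symm
  have QtendBot : Tendsto Q atBot (𝓝 1) := by
    have h1 : Tendsto (fun x : ℝ => ∫ t in x..(0:ℝ), f t) atBot (𝓝 (∫ t in Set.Iic 0, f t)) :=
      intervalIntegral_tendsto_integral_Iic 0 hfi.integrableOn tendsto_id
    have h2 : Tendsto (fun x : ℝ => Q 0 + ∫ t in x..(0:ℝ), f t) atBot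
        (𝓝 (Q 0 + ∫ t in Set.Iic 0, f t)) := tendsto_const_nhds.add h1
    have h3 : Q 0 + ∫ t in Set.Iic 0, f t = 1 := by
      rw [hQ' 0, add_comm]
      rw [intervalIntegral.integral_Iic_add_Ioi hfi.integrableOn hfi.integrableOn]
      exact htot
    rw [h3] at h2
    refine h2.congr fun x => ?_
    rw [Qprim x, intervalIntegral.integral_symm]
    ring
  -- the function g with Φ x = g (√(B N x)) for x > 0
  have h2pos : (0:ℝ) < Real.log 2 := Real.log_pos one_lt_two
  have hk : Real.exp (-3) / 2 < (C - R) * Real.log 2 := by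
    have h3 : Real.exp (-3) < (C - R) * (2 * Real.log 2) :=
      (div_lt_iff₀ (by positivity)).1 h
    nlinarith
  have hkpos : 0 < (C - R) * Real.log 2 := lt_trans (by positivity) hk
  set g : ℝ → ℝ := fun u => (C - R) * Real.log 2 * u + Real.log u * u⁻¹ with hg
  have hgcont : ContinuousOn g (Set.Ioi 0) := by
    apply ContinuousOn.add
    · exact (continuous_const.mul continuous_id).continuousOn
    · exact ContinuousOn.mul
        (Real.continuousOn_log.mono fun x hx => by simpa using (ne_of_gt hx))
        (continuousOn_id.inv₀ fun x hx => ne_of_gt hx)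
  have hgmono : StrictMonoOn g (Set.Ioi 0) := by
    apply strictMonoOn_of_deriv_pos (convex_Ioi 0) hgcont
    intro u hu
    rw [interior_Ioi] at hu
    have hu0 : (0:ℝ) < u := hu
    have hd : HasDerivAt g ((C - R) * Real.log 2 +
        (u⁻¹ * u⁻¹ + Real.log u * (-(u ^ 2)⁻¹))) u := by
      have h1 : HasDerivAt (fun u : ℝ => (C - R) * Real.log 2 * u)
          ((C - R) * Real.log 2) u := by
        simpa using (hasDerivAt_id u).const_mul ((C - R) * Real.log 2)
      have h2 : HasDerivAt (fun u : ℝ => Real.log u * u⁻¹)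
          (u⁻¹ * u⁻¹ + Real.log u * (-(u ^ 2)⁻¹)) u :=
        (Real.hasDerivAt_log hu0.ne').mul (hasDerivAt_inv hu0.ne')
      exact h1.add h2
    rw [hd.deriv]
    have hlog : Real.log u ≤ 1 + Real.exp (-3) / 2 * u ^ 2 := by
      have h4 : Real.log (u ^ 2 * Real.exp (-3)) ≤ u ^ 2 * Real.exp (-3) - 1 :=
        Real.log_le_sub_one_of_pos (by positivity)
      rw [Real.log_mul (by positivity) (Real.exp_ne_zero _), Real.log_exp,
        Real.log_pow] at h4
      push_cast at h4
      nlinarith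
    have hu2 : (0:ℝ) < u ^ 2 := by positivity
    have e1 : u⁻¹ * u⁻¹ + Real.log u * (-(u ^ 2)⁻¹) = (1 - Real.log u) / u ^ 2 := by
      field_simp
      ring
    rw [e1]
    have e2 : -(Real.exp (-3) / 2) ≤ (1 - Real.log u) / u ^ 2 := by
      rw [le_div_iff₀ hu2]
      nlinarith
    linarith
  have hΦg : ∀ x ∈ Set.Ioi (0:ℝ), Φ x = g (Real.sqrt (B * N * x)) := by
    intro x hx
    have hx0 : (0:ℝ) < x := hx
    have hax : 0 < B * N * x := by positivity
    have hu : 0 < Real.sqrt (B * N * x) := Real.sqrt_pos.2 hax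
    have hu2 : Real.sqrt (B * N * x) ^ 2 = B * N * x := Real.sq_sqrt hax.le
    rw [hΦ x, hg]
    rw [Real.logb, Real.logb, Real.log_exp]
    have hlogax : Real.log (B * N * x) = 2 * Real.log (Real.sqrt (B * N * x)) := by
      rw [Real.log_sqrt hax.le]; ring
    rw [hlogax]
    have hCRx : (C - R) * B * N * x = (C - R) * Real.sqrt (B * N * x) ^ 2 := by
      rw [hu2]; ring
    rw [hCRx]
    field_simp
  have hΦmono : StrictMonoOn Φ (Set.Ioi 0) := by
    intro x hx y hy hxy
    rw [hΦg x hx, hΦg y hy]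
    have hx0 : (0:ℝ) < x := hx
    have hy0 : (0:ℝ) < y := hy
    exact hgmono (Set.mem_Ioi.2 (Real.sqrt_pos.2 (by positivity)))
      (Set.mem_Ioi.2 (Real.sqrt_pos.2 (by positivity)))
      (Real.sqrt_lt_sqrt (by positivity) (by nlinarith))
  have hΦcont : ContinuousOn Φ (Set.Ioi 0) := by
    have hc : ContinuousOn (fun x => g (Real.sqrt (B * N * x))) (Set.Ioi 0) := by
      apply hgcont.comp
        ((Real.continuous_sqrt.comp (continuous_const.mul continuous_id)).continuousOn)
      intro x hx
      have hx0 : (0:ℝ) < x := hx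
      exact Set.mem_Ioi.2 (Real.sqrt_pos.2 (show 0 < B * N * x by positivity))
    exact hc.congr hΦg
  -- limits of Φ
  have TΦtop : Tendsto Φ atTop atTop := by
    have hsqrt : Tendsto Real.sqrt atTop atTop := by
      refine tendsto_atTop_atTop.2 fun b => ⟨(max b 0) ^ 2, fun a ha => ?_⟩
      calc b ≤ max b 0 := le_max_left _ _
        _ = Real.sqrt ((max b 0) ^ 2) := (Real.sqrt_sq (le_max_right _ _)).symm
        _ ≤ Real.sqrt a := Real.sqrt_le_sqrt ha
    have hsq : Tendsto (fun x : ℝ => Real.sqrt (B * N * x)) atTop atTop :=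
      hsqrt.comp (Tendsto.const_mul_atTop hBN tendsto_id)
    have hgt : Tendsto g atTop atTop := by
      refine tendsto_atTop_mono' atTop ?_ (Tendsto.const_mul_atTop hkpos tendsto_id)
      filter_upwards [eventually_ge_atTop (1:ℝ)] with u hu
      have hu0 : (0:ℝ) < u := lt_of_lt_of_le one_pos hu
      have : 0 ≤ Real.log u * u⁻¹ :=
        mul_nonneg (Real.log_nonneg hu) (by positivity)
      simp only [hg, id_eq]
      linarith
    refine (hgt.comp hsq).congr' ?_
    filter_upwards [eventually_gt_atTop (0:ℝ)] with x hx
    exact (hΦg x hx).symm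
  have TΦbot : Tendsto Φ (𝓝[>] (0:ℝ)) atBot := by
    have hsq0 : Tendsto (fun x : ℝ => Real.sqrt (B * N * x)) (𝓝[>] (0:ℝ)) (𝓝[>] (0:ℝ)) := by
      rw [tendsto_nhdsWithin_iff]
      constructor
      · have hc : Continuous fun x : ℝ => Real.sqrt (B * N * x) :=
          Real.continuous_sqrt.comp (continuous_const.mul continuous_id)
        have := hc.tendsto 0
        simp only [mul_zero, Real.sqrt_zero] at this
        exact this.mono_left nhdsWithin_le_nhds
      · filter_upwards [self_mem_nhdsWithin] with x hx
        have hx0 : (0:ℝ) < x := hx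
        exact Set.mem_Ioi.2 (Real.sqrt_pos.2 (by positivity))
    have hgb : Tendsto g (𝓝[>] (0:ℝ)) atBot := by
      have h1 : Tendsto (fun u : ℝ => (C - R) * Real.log 2 * u) (𝓝[>] (0:ℝ))
          (𝓝 ((C - R) * Real.log 2 * 0)) :=
        ((continuous_const.mul continuous_id).tendsto 0).mono_left nhdsWithin_le_nhds
      have h2 : Tendsto (fun u : ℝ => Real.log u * u⁻¹) (𝓝[>] (0:ℝ)) atBot :=
        Real.tendsto_log_nhdsGT_zero.atBot_mul_atTop₀ tendsto_inv_nhdsGT_zero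
      exact h1.add_atBot h2
    exact (hgb.comp hsq0).congr'
      (by filter_upwards [self_mem_nhdsWithin] with x hx; exact (hΦg x hx).symm)
  -- the key comparison lemma
  have hkey : ∀ s₁ s₂ : ℝ, 0 < s₁ → 0 < s₂ → Q (Φ s₂) < Q (Φ s₁) → s₁ < s₂ := by
    intro s₁ s₂ h1 h2 hlt
    by_contra hc
    push_neg at hc
    have hle : Φ s₂ ≤ Φ s₁ := by
      rcases eq_or_lt_of_le hc with heq | hlt2
      · rw [heq]
      · exact (hΦmono (Set.mem_Ioi.2 h2) (Set.mem_Ioi.2 h1) hlt2).le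
    have := Qanti _ _ hle
    linarith
  constructor
  · -- existence and uniqueness
    rintro P ⟨hP0, hP1⟩
    have hq0 : 0 < 1 - P := by linarith
    have hq1 : 1 - P < 1 := by linarith
    obtain ⟨x₁, hx₁⟩ : ∃ x, 1 - P < Q x :=
      (QtendBot.eventually (eventually_gt_nhds hq1)).exists
    obtain ⟨x₂, hx₂⟩ : ∃ x, Q x < 1 - P :=
      (QtendTop.eventually (eventually_lt_nhds hq0)).exists
    obtain ⟨t₁, ht₁Φ, ht₁pos⟩ : ∃ t, Φ t < x₁ ∧ t ∈ Set.Ioi (0:ℝ) :=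
      ((TΦbot.eventually (eventually_lt_atBot x₁)).and self_mem_nhdsWithin).exists
    obtain ⟨t₂, ht₂Φ, ht₂pos⟩ : ∃ t, x₂ < Φ t ∧ 0 < t :=
      ((TΦtop.eventually (eventually_gt_atTop x₂)).and (eventually_gt_atTop 0)).exists
    have ht₁pos' : (0:ℝ) < t₁ := ht₁pos
    have hQt₁ : 1 - P < Q (Φ t₁) := lt_of_lt_of_le hx₁ (Qanti _ _ ht₁Φ.le)
    have hQt₂ : Q (Φ t₂) < 1 - P := lt_of_le_of_lt (Qanti _ _ ht₂Φ.le) hx₂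
    have ht12 : t₁ < t₂ := hkey t₁ t₂ ht₁pos' ht₂pos (by linarith)
    have hcont : ContinuousOn (fun t => Q (Φ t)) (Set.Icc t₁ t₂) :=
      Qcont.comp_continuousOn
        (hΦcont.mono fun x hx => lt_of_lt_of_le ht₁pos' hx.1)
    have hmem : (1 - P) ∈ Set.Icc ((fun t => Q (Φ t)) t₂) ((fun t => Q (Φ t)) t₁) :=
      ⟨hQt₂.le, hQt₁.le⟩
    obtain ⟨t, htmem, htval⟩ := intermediate_value_Icc' ht12.le hcont hmem
    have htval' : Q (Φ t) = 1 - P := htval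
    have htpos : 0 < t := lt_of_lt_of_le ht₁pos' htmem.1
    refine ⟨t, ⟨htpos, htval'⟩, ?_⟩
    rintro t' ⟨ht'pos, ht'val⟩
    by_contra hne
    rcases lt_or_gt_of_ne hne with hlt | hlt
    · have := Qstrict _ _ (hΦmono (Set.mem_Ioi.2 ht'pos) (Set.mem_Ioi.2 htpos) hlt)
      rw [htval', ht'val] at this
      exact lt_irrefl _ this
    · have := Qstrict _ _ (hΦmono (Set.mem_Ioi.2 htpos) (Set.mem_Ioi.2 ht'pos) hlt)
      rw [htval', ht'val] at this
      exact lt_irrefl _ this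
  · -- monotonicity in P
    rintro P₁ P₂ hP₁ hP₂ h12 t₁ t₂ ⟨h1p, h1e⟩ ⟨h2p, h2e⟩
    exact hkey t₁ t₂ h1p h2p (by rw [h1e, h2e]; linarith)
end

section
/- Let K ≥ 1 be a natural number, D > 0, and let X₁, …, X_K be independent real random variables on a probability space, each distributed with probability density x ↦ 2x/D² on the interval [0, D] (so P(Xᵢ ≤ x) = x²/D² for x ∈ [0, D]). Then for every c with 0 < c ≤ D^K, P(∏_{i=1}^K Xᵢ ≥ c) ≥ (1 − c^{2/K}/D²)^K. -/
open MeasureTheory ProbabilityTheory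

/-- Lower-bound half of Corollary 1 of the paper: if `X₁, …, X_K` are i.i.d.
with density `2x/D²` on `[0, D]` (so `P(Xᵢ ≤ x) = x²/D²` for `x ∈ [0, D]`),
then for `0 < c ≤ D^K`, `P(∏ Xᵢ ≥ c) ≥ (1 − c^{2/K}/D²)^K`. -/
theorem stmt_8 {Ω : Type*} [MeasureSpace Ω] [IsProbabilityMeasure (ℙ : Measure Ω)]
    (K : ℕ) (hK : 1 ≤ K) (D : ℝ) (hD : 0 < D)
    (X : Fin K → Ω → ℝ) (hmeas : ∀ i, Measurable (X i))
    (hindep : iIndepFun X ℙ)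
    (hcdf : ∀ i, ∀ x ∈ Set.Icc (0:ℝ) D, (ℙ {ω | X i ω ≤ x}).toReal = x ^ 2 / D ^ 2)
    (c : ℝ) (hc : 0 < c) (hcD : c ≤ D ^ K) :
    (1 - c ^ ((2:ℝ) / K) / D ^ 2) ^ K ≤ (ℙ {ω | c ≤ ∏ i, X i ω}).toReal := by
  have hKne : (K:ℝ) ≠ 0 := by positivity
  set t : ℝ := c ^ ((1:ℝ)/K) with ht
  have ht0 : 0 < t := Real.rpow_pos_of_pos hc _
  have htK : t ^ K = c := by
    rw [ht, ← Real.rpow_natCast (c ^ ((1:ℝ)/K)) K, ← Real.rpow_mul hc.le]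
    rw [one_div, inv_mul_cancel₀ hKne, Real.rpow_one]
  have htD : t ≤ D := by
    refine le_of_pow_le_pow_left₀ (Nat.one_le_iff_ne_zero.mp hK) hD.le ?_
    rw [htK]; exact hcD
  have ht2 : t ^ 2 = c ^ ((2:ℝ)/K) := by
    rw [ht, ← Real.rpow_natCast (c ^ ((1:ℝ)/K)) 2, ← Real.rpow_mul hc.le]
    rw [one_div]
    congr 1
    ring
  -- the intersection event
  set S : Fin K → Set Ω := fun i => {ω | t ≤ X i ω} with hS
  have hSsub : (⋂ i, S i) ⊆ {ω | c ≤ ∏ i, X i ω} := by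
    intro ω hω
    simp only [Set.mem_iInter, hS, Set.mem_setOf_eq] at hω ⊢
    calc c = ∏ _i : Fin K, t := by
            rw [Finset.prod_const, Finset.card_univ, Fintype.card_fin, htK]
      _ ≤ ∏ i, X i ω := Finset.prod_le_prod (fun i _ => ht0.le) (fun i _ => hω i)
  have hmeasS : ∀ i, MeasurableSet[MeasurableSpace.comap (X i) inferInstance] (S i) := by
    intro i
    exact ⟨Set.Ici t, measurableSet_Ici, rfl⟩
  have hinter : ℙ (⋂ i, S i) = ∏ i, ℙ (S i) := hindep.meas_iInter hmeasS
  -- lower bound each factor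
  have hfac : ∀ i, 1 - c ^ ((2:ℝ)/K) / D ^ 2 ≤ (ℙ (S i)).toReal := by
    intro i
    have hA : MeasurableSet {ω | X i ω ≤ t} := (hmeas i) measurableSet_Iic
    have hc1 : ℙ {ω | X i ω ≤ t}ᶜ = 1 - ℙ {ω | X i ω ≤ t} := by
      rw [measure_compl hA (measure_ne_top _ _), measure_univ]
    have hcdf' : (ℙ {ω | X i ω ≤ t}).toReal = t ^ 2 / D ^ 2 :=
      hcdf i t ⟨ht0.le, htD⟩
    have hsub : {ω | X i ω ≤ t}ᶜ ⊆ S i := by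
      intro ω hω
      simp only [Set.mem_compl_iff, Set.mem_setOf_eq, not_le] at hω
      exact le_of_lt hω
    have h1 : (ℙ {ω | X i ω ≤ t}ᶜ).toReal = 1 - t ^ 2 / D ^ 2 := by
      rw [hc1, ENNReal.toReal_sub_of_le prob_le_one ENNReal.one_ne_top,
        ENNReal.toReal_one, hcdf']
    calc 1 - c ^ ((2:ℝ)/K) / D ^ 2 = (ℙ {ω | X i ω ≤ t}ᶜ).toReal := by
          rw [h1, ht2]
      _ ≤ (ℙ (S i)).toReal :=
          ENNReal.toReal_mono (measure_ne_top _ _) (measure_mono hsub)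
  have ha0 : 0 ≤ 1 - c ^ ((2:ℝ)/K) / D ^ 2 := by
    have : t ^ 2 ≤ D ^ 2 := pow_le_pow_left₀ ht0.le htD 2
    rw [← ht2]
    have hD2 : (0:ℝ) < D ^ 2 := by positivity
    have : t ^ 2 / D ^ 2 ≤ 1 := (div_le_one hD2).mpr this
    linarith
  calc (1 - c ^ ((2:ℝ)/K) / D ^ 2) ^ K
      = ∏ _i : Fin K, (1 - c ^ ((2:ℝ)/K) / D ^ 2) := by
        rw [Finset.prod_const, Finset.card_univ, Fintype.card_fin]
    _ ≤ ∏ i, (ℙ (S i)).toReal :=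
        Finset.prod_le_prod (fun i _ => ha0) (fun i _ => hfac i)
    _ = (ℙ (⋂ i, S i)).toReal := by
        rw [hinter, ENNReal.toReal_prod]
    _ ≤ (ℙ {ω | c ≤ ∏ i, X i ω}).toReal :=
        ENNReal.toReal_mono (measure_ne_top _ _) (measure_mono hSsub)
end

section
/- Let K ≥ 1 be a natural number, D > 0, and let X₁, …, X_K be independent real random variables on a probability space, each distributed with probability density x ↦ 2x/D² on the interval [0, D] (so P(Xᵢ ≤ x) = x²/D² for x ∈ [0, D]). Then for every c with 0 < c ≤ D^K, P(∏_{i=1}^K Xᵢ ≥ c) ≤ 1 − (c^{2/K}/D²)^K. -/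
open MeasureTheory ProbabilityTheory

/-- Upper-bound half of Corollary 1 of the paper: if `X₁, …, X_K` are i.i.d.
with density `2x/D²` on `[0, D]` (so `P(Xᵢ ≤ x) = x²/D²` for `x ∈ [0, D]`),
then for `0 < c ≤ D^K`, `P(∏ Xᵢ ≥ c) ≤ 1 − (c^{2/K}/D²)^K`. -/
theorem stmt_9 {Ω : Type*} [MeasureSpace Ω] [IsProbabilityMeasure (ℙ : Measure Ω)]
    (K : ℕ) (hK : 1 ≤ K) (D : ℝ) (hD : 0 < D)
    (X : Fin K → Ω → ℝ) (hmeas : ∀ i, Measurable (X i))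
    (hindep : iIndepFun X ℙ)
    (hcdf : ∀ i, ∀ x ∈ Set.Icc (0:ℝ) D, (ℙ {ω | X i ω ≤ x}).toReal = x ^ 2 / D ^ 2)
    (c : ℝ) (hc : 0 < c) (hcD : c ≤ D ^ K) :
    (ℙ {ω | c ≤ ∏ i, X i ω}).toReal ≤ 1 - (c ^ ((2:ℝ) / K) / D ^ 2) ^ K := by
  have hKne : (K : ℝ) ≠ 0 := Nat.cast_ne_zero.mpr (by omega)
  set t : ℝ := c ^ ((1:ℝ) / K) with ht
  have ht0 : 0 < t := Real.rpow_pos_of_pos hc _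
  have htK : t ^ K = c := by
    rw [ht, ← Real.rpow_natCast (c ^ ((1:ℝ)/K)) K, ← Real.rpow_mul hc.le]
    field_simp
    simp
  have htD : t ≤ D := by
    have : t ≤ (D ^ K : ℝ) ^ ((1:ℝ) / K) :=
      Real.rpow_le_rpow hc.le hcD (by positivity)
    rwa [← Real.rpow_natCast D K, ← Real.rpow_mul hD.le,
      mul_one_div, div_self hKne, Real.rpow_one] at this
  -- null set of nonpositive values
  have hnull : ∀ i, ℙ {ω | X i ω ≤ 0} = 0 := by
    intro i
    have h0 := hcdf i 0 ⟨le_refl _, hD.le⟩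
    simp only [ne_eq, zero_pow, OfNat.ofNat_ne_zero, not_false_eq_true, zero_div] at h0
    exact (ENNReal.toReal_eq_zero_iff _).mp h0 |>.resolve_right (measure_ne_top _ _)
  have hN : ℙ (⋃ i, {ω | X i ω ≤ 0}) = 0 :=
    le_antisymm ((measure_iUnion_le _).trans (by simp [hnull])) zero_le
  -- key bound for s < t
  have key : ∀ s : ℝ, 0 ≤ s → s < t →
      (ℙ {ω | c ≤ ∏ i, X i ω}).toReal ≤ 1 - (s ^ 2 / D ^ 2) ^ K := by
    intro s hs0 hst
    have hAmeas : MeasurableSet (⋂ i, {ω | X i ω ≤ s}) :=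
      MeasurableSet.iInter fun i => (hmeas i) measurableSet_Iic
    have hsub : {ω | c ≤ ∏ i, X i ω} ⊆
        (⋂ i, {ω | X i ω ≤ s})ᶜ ∪ (⋃ i, {ω | X i ω ≤ 0}) := by
      intro ω hω
      by_cases hpos : ∀ i, 0 < X i ω
      · left
        simp only [Set.mem_compl_iff, Set.mem_iInter, Set.mem_setOf_eq, not_forall, not_le]
        by_contra h
        push_neg at h
        have hprod : ∏ i, X i ω ≤ s ^ K := by
          have := Finset.prod_le_prod (s := Finset.univ) (f := fun i => X i ω)
            (g := fun _ : Fin K => s) (fun i _ => (hpos i).le) (fun i _ => h i)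
          simpa using this
        have : s ^ K < t ^ K := pow_lt_pow_left₀ hst hs0 (by omega)
        rw [htK] at this
        exact absurd hω (not_le.mpr (lt_of_le_of_lt hprod this))
      · right
        push_neg at hpos
        obtain ⟨i, hi⟩ := hpos
        exact Set.mem_iUnion.mpr ⟨i, hi⟩
    have hmeasA : ℙ (⋂ i, {ω | X i ω ≤ s}) = ENNReal.ofReal ((s ^ 2 / D ^ 2) ^ K) := by
      rw [hindep.meas_iInter (s := fun i => {ω | X i ω ≤ s}) (fun i => ⟨Set.Iic s, measurableSet_Iic, rfl⟩)]
      have hv : ∀ i : Fin K, ℙ {ω | X i ω ≤ s} = ENNReal.ofReal (s ^ 2 / D ^ 2) := by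
        intro i
        have := hcdf i s ⟨hs0, le_trans hst.le htD⟩
        rw [← this, ENNReal.ofReal_toReal (measure_ne_top _ _)]
      simp only [hv]
      rw [Finset.prod_const, Finset.card_univ, Fintype.card_fin,
        ← ENNReal.ofReal_pow (by positivity)]
    have hle : ℙ {ω | c ≤ ∏ i, X i ω} ≤ ℙ ((⋂ i, {ω | X i ω ≤ s})ᶜ) := by
      calc ℙ {ω | c ≤ ∏ i, X i ω} ≤ ℙ ((⋂ i, {ω | X i ω ≤ s})ᶜ ∪ ⋃ i, {ω | X i ω ≤ 0}) :=
            measure_mono hsub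
        _ ≤ ℙ ((⋂ i, {ω | X i ω ≤ s})ᶜ) + ℙ (⋃ i, {ω | X i ω ≤ 0}) := measure_union_le _ _
        _ = _ := by rw [hN, add_zero]
    have hc1 : (ℙ ((⋂ i, {ω | X i ω ≤ s})ᶜ)).toReal = 1 - (s ^ 2 / D ^ 2) ^ K := by
      rw [prob_compl_eq_one_sub hAmeas, hmeasA,
        ENNReal.toReal_sub_of_le (by
          rw [← hmeasA]; exact prob_le_one) ENNReal.one_ne_top,
        ENNReal.toReal_one, ENNReal.toReal_ofReal (by positivity)]
    calc (ℙ {ω | c ≤ ∏ i, X i ω}).toReal ≤ (ℙ ((⋂ i, {ω | X i ω ≤ s})ᶜ)).toReal :=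
          ENNReal.toReal_mono (measure_ne_top _ _) hle
      _ = _ := by rw [hc1]
  -- take the limit s → t⁻
  have hmain : (ℙ {ω | c ≤ ∏ i, X i ω}).toReal ≤ 1 - (t ^ 2 / D ^ 2) ^ K := by
    have hu : Filter.Tendsto (fun n : ℕ => (1 - 1 / (n + 1 : ℝ)) * t)
        Filter.atTop (nhds t) := by
      have : Filter.Tendsto (fun n : ℕ => 1 / (n + 1 : ℝ)) Filter.atTop (nhds 0) :=
        tendsto_one_div_add_atTop_nhds_zero_nat
      have := ((tendsto_const_nhds (x := (1:ℝ))).sub this).mul (tendsto_const_nhds (x := t))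
      simpa using this
    have hf : Filter.Tendsto (fun s : ℝ => 1 - (s ^ 2 / D ^ 2) ^ K) (nhds t)
        (nhds (1 - (t ^ 2 / D ^ 2) ^ K)) := by
      exact (Continuous.tendsto (by continuity) t)
    refine ge_of_tendsto (hf.comp hu) ?_
    filter_upwards [Filter.eventually_atTop.mpr ⟨0, fun n hn => le_refl n⟩] with n _
    have h1 : (0:ℝ) < 1 / (n + 1 : ℝ) := by positivity
    have h2 : 1 / (n + 1 : ℝ) ≤ 1 := by
      rw [div_le_one (by positivity)]
      have : (0:ℝ) ≤ n := Nat.cast_nonneg n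
      linarith
    simp only [Function.comp]
    exact key _ (by nlinarith) (by nlinarith)
  have ht2 : t ^ 2 = c ^ ((2:ℝ) / K) := by
    rw [ht, ← Real.rpow_natCast (c ^ ((1:ℝ)/K)) 2, ← Real.rpow_mul hc.le]
    congr 1
    push_cast
    ring
  rwa [ht2] at hmain
end

section
/- Let V be a real inner product space, let R > 0 and h₁, h₂ ≥ 0, and let p, q ∈ V with ‖p‖ = R + h₁ and ‖q‖ = R + h₂. If every point of the closed segment joining p and q has norm at least R (i.e., the segment does not meet the open ball of radius R centered at the origin), then ‖p − q‖ ≤ √(h₁·(h₁ + 2R)) + √(h₂·(h₂ + 2R)). -/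
/-- Maximum-visible-distance bound (Corollary 3 of the paper): if `‖p‖ = R + h₁`,
`‖q‖ = R + h₂` and the segment joining `p` and `q` stays outside the open ball of
radius `R` around the origin, then
`‖p − q‖ ≤ √(h₁(h₁+2R)) + √(h₂(h₂+2R))`. -/
theorem stmt_11 {V : Type*} [NormedAddCommGroup V] [InnerProductSpace ℝ V]
    (R h₁ h₂ : ℝ) (hR : 0 < R) (hh₁ : 0 ≤ h₁) (hh₂ : 0 ≤ h₂)
    (p q : V) (hp : ‖p‖ = R + h₁) (hq : ‖q‖ = R + h₂)
    (hseg : ∀ x ∈ segment ℝ p q, R ≤ ‖x‖) :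
    ‖p - q‖ ≤ Real.sqrt (h₁ * (h₁ + 2 * R)) + Real.sqrt (h₂ * (h₂ + 2 * R)) := by
  have sqA : 0 ≤ Real.sqrt (h₁ * (h₁ + 2 * R)) := Real.sqrt_nonneg _
  have sqB : 0 ≤ Real.sqrt (h₂ * (h₂ + 2 * R)) := Real.sqrt_nonneg _
  set u := q - p with hu
  have hpq : ‖p - q‖ = ‖u‖ := by rw [hu, norm_sub_rev]
  have hqpu : q = p + u := by simp [hu]
  have hq2 : ‖q‖ ^ 2 = ‖p‖ ^ 2 + 2 * inner ℝ p u + ‖u‖ ^ 2 := by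
    rw [hqpu]; exact norm_add_sq_real p u
  have hqu : (inner ℝ q u : ℝ) = inner ℝ p u + ‖u‖ ^ 2 := by
    rw [hqpu, inner_add_left, real_inner_self_eq_norm_sq]
  rcases le_or_gt 0 (inner ℝ p u : ℝ) with hs | hs
  · -- closest point is p : ‖u‖² ≤ h₂(h₂+2R)
    have h1 : ‖u‖ ^ 2 ≤ h₂ * (h₂ + 2 * R) := by nlinarith [hq2, hp, hq, hs, hR, hh₁]
    have : ‖u‖ ≤ Real.sqrt (h₂ * (h₂ + 2 * R)) := by
      calc ‖u‖ = Real.sqrt (‖u‖ ^ 2) := (Real.sqrt_sq (norm_nonneg _)).symm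
        _ ≤ _ := Real.sqrt_le_sqrt h1
    rw [hpq]; linarith
  rcases le_or_gt (inner ℝ q u : ℝ) 0 with hs' | hs'
  · -- closest point is q : ‖u‖² ≤ h₁(h₁+2R)
    have h1 : ‖u‖ ^ 2 ≤ h₁ * (h₁ + 2 * R) := by nlinarith [hq2, hp, hq, hqu, hs', hR, hh₂]
    have : ‖u‖ ≤ Real.sqrt (h₁ * (h₁ + 2 * R)) := by
      calc ‖u‖ = Real.sqrt (‖u‖ ^ 2) := (Real.sqrt_sq (norm_nonneg _)).symm
        _ ≤ _ := Real.sqrt_le_sqrt h1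
    rw [hpq]; linarith
  · -- projection of origin is interior
    have hu0 : u ≠ 0 := by
      intro h
      rw [h, inner_zero_right] at hs
      exact lt_irrefl 0 hs
    have hnu : 0 < ‖u‖ := norm_pos_iff.mpr hu0
    have hnu2 : 0 < ‖u‖ ^ 2 := by positivity
    set t : ℝ := -(inner ℝ p u) / ‖u‖ ^ 2 with ht
    have ht0 : 0 ≤ t := div_nonneg (by linarith) (le_of_lt hnu2)
    have ht1 : t ≤ 1 := by
      rw [ht, div_le_one hnu2]
      linarith [hqu]
    set m : V := p + t • u with hm
    have hmseg : m ∈ segment ℝ p q := by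
      rw [segment_eq_image']
      exact ⟨t, ⟨ht0, ht1⟩, rfl⟩
    have hmR : R ≤ ‖m‖ := hseg m hmseg
    have hmu : (inner ℝ m u : ℝ) = 0 := by
      rw [hm, inner_add_left, real_inner_smul_left, real_inner_self_eq_norm_sq, ht]
      field_simp
      ring
    have hpm : ‖p‖ ^ 2 = ‖m‖ ^ 2 + t ^ 2 * ‖u‖ ^ 2 := by
      have hp' : p = m - t • u := by rw [hm]; abel
      rw [hp', norm_sub_sq_real, real_inner_smul_right, hmu, norm_smul]
      simp [mul_pow, sq_abs]
    have hqm : ‖q‖ ^ 2 = ‖m‖ ^ 2 + (1 - t) ^ 2 * ‖u‖ ^ 2 := by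
      have hq' : q = m + (1 - t) • u := by
        rw [hm, hqpu]
        rw [sub_smul, one_smul]; abel
      rw [hq', norm_add_sq_real, real_inner_smul_right, hmu, norm_smul]
      simp [mul_pow, sq_abs]
    have hA : (t * ‖u‖) ^ 2 ≤ h₁ * (h₁ + 2 * R) := by nlinarith [hpm, hp, hmR, hnu]
    have hB : ((1 - t) * ‖u‖) ^ 2 ≤ h₂ * (h₂ + 2 * R) := by nlinarith [hqm, hq, hmR, hnu]
    have hA' : t * ‖u‖ ≤ Real.sqrt (h₁ * (h₁ + 2 * R)) := by
      calc t * ‖u‖ = Real.sqrt ((t * ‖u‖) ^ 2) := by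
            rw [Real.sqrt_sq (mul_nonneg ht0 (norm_nonneg _))]
        _ ≤ _ := Real.sqrt_le_sqrt hA
    have hB' : (1 - t) * ‖u‖ ≤ Real.sqrt (h₂ * (h₂ + 2 * R)) := by
      calc (1 - t) * ‖u‖ = Real.sqrt (((1 - t) * ‖u‖) ^ 2) := by
            rw [Real.sqrt_sq (mul_nonneg (by linarith) (norm_nonneg _))]
        _ ≤ _ := Real.sqrt_le_sqrt hB
    rw [hpq]
    have : ‖u‖ = t * ‖u‖ + (1 - t) * ‖u‖ := by ring
    linarith
end
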